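/- Let μ = ∏_{n=1}^∞ ν_n be a product-type probability measure on ℝ^ℕ where each ν_n is a non-atomic probability measure on ℝ. Then μ^ℕ-almost every sequence of points (x^(i))_{i∈ℕ} in ℝ^ℕ has the independent order property: for any finite subcollection x^(i_1), ..., x^(i_k) and any finite list of orderings ≺_1, ..., ≺_N of {1,...,k}, there exist distinct coordinate positions j_1, ..., j_N such that for each ℓ, m ≺_ℓ n if and only if {x^(i_m)_{j_ℓ}} < {x^(i_n)_{j_ℓ}}. -/

import Mathlib

open Filter Topology Set MeasureTheory ProbabilityTheory

/-- The independent order property for a sequence of points of `ℝ^ℕ`: for every finite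
subcollection and every finite list of orderings (encoded by permutations giving the
increasing enumeration), there are distinct coordinate positions in which the fractional
parts of the chosen points realize each prescribed ordering. -/
def HasIOP (x : ℕ → ℕ → ℝ) : Prop :=
  ∀ (k : ℕ) (idx : Fin k → ℕ), Function.Injective idx →
  ∀ (N : ℕ) (ord : Fin N → Equiv.Perm (Fin k)),
  ∃ j : Fin N → ℕ, Function.Injective j ∧
    ∀ (ℓ : Fin N) (m n : Fin k),
      m < n ↔ Int.fract (x (idx (ord ℓ m)) (j ℓ)) < Int.fract (x (idx (ord ℓ n)) (j ℓ))

open scoped ENNReal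

lemma exists_injective_mem {N : ℕ} (J : Fin N → Set ℕ) (hJ : ∀ ℓ, (J ℓ).Infinite) :
    ∃ f : Fin N → ℕ, Function.Injective f ∧ ∀ ℓ, f ℓ ∈ J ℓ := by
  induction N with
  | zero => exact ⟨Fin.elim0, fun a => a.elim0, fun a => a.elim0⟩
  | succ N ih =>
    obtain ⟨f, hfinj, hfmem⟩ := ih (fun ℓ => J ℓ.castSucc) (fun ℓ => hJ _)
    obtain ⟨x, hxJ, hxf⟩ : ∃ x, x ∈ J (Fin.last N) ∧ x ∉ Set.range f := by
      obtain ⟨x, hx1, hx2⟩ := ((hJ (Fin.last N)).diff (Set.finite_range f)).nonempty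
      exact ⟨x, hx1, hx2⟩
    refine ⟨Fin.snoc f x, ?_, ?_⟩
    · intro a b hab
      rcases Fin.eq_castSucc_or_eq_last a with ⟨a', rfl⟩ | rfl <;>
        rcases Fin.eq_castSucc_or_eq_last b with ⟨b', rfl⟩ | rfl
      · simp only [Fin.snoc_castSucc] at hab; exact congrArg _ (hfinj hab)
      · simp only [Fin.snoc_castSucc, Fin.snoc_last] at hab
        exact absurd ⟨a', hab⟩ hxf
      · simp only [Fin.snoc_castSucc, Fin.snoc_last] at hab
        exact absurd ⟨b', hab.symm⟩ hxf
      · rfl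
    · intro ℓ
      rcases Fin.eq_castSucc_or_eq_last ℓ with ⟨ℓ', rfl⟩ | rfl
      · simpa using hfmem ℓ'
      · simpa using hxJ

/-- the set of tuples whose fractional parts realize the ordering `σ` -/
def ordSet (k : ℕ) (σ : Equiv.Perm (Fin k)) : Set (Fin k → ℝ) :=
  {y | ∀ m n, m < n ↔ Int.fract (y (σ m)) < Int.fract (y (σ n))}

lemma measurableSet_ordSet (k : ℕ) (σ : Equiv.Perm (Fin k)) : MeasurableSet (ordSet k σ) := by
  have : ordSet k σ = ⋂ (m) (n),
      {y : Fin k → ℝ | m < n ↔ Int.fract (y (σ m)) < Int.fract (y (σ n))} := by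
    ext y; simp [ordSet]
  rw [this]
  refine MeasurableSet.iInter fun m => MeasurableSet.iInter fun n => ?_
  by_cases h : m < n
  · simp only [h, true_iff]
    exact measurableSet_lt (measurable_fract.comp (measurable_pi_apply _))
      (measurable_fract.comp (measurable_pi_apply _))
  · simp only [h, false_iff, not_lt]
    exact measurableSet_le (measurable_fract.comp (measurable_pi_apply _))
      (measurable_fract.comp (measurable_pi_apply _))

lemma mem_ordSet_iff_strictMono {k : ℕ} {σ : Equiv.Perm (Fin k)} {y : Fin k → ℝ} :
    y ∈ ordSet k σ ↔ StrictMono ((fun m => Int.fract (y m)) ∘ σ) := by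
  constructor
  · intro h m n hmn; exact (h m n).1 hmn
  · intro h m n
    refine ⟨fun hmn => h hmn, fun hlt => ?_⟩
    rcases lt_trichotomy m n with h1 | rfl | h1
    · exact h1
    · exact absurd hlt (lt_irrefl _)
    · exact absurd (h h1) (not_lt.2 hlt.le)

lemma ordSet_eq_preimage (k : ℕ) (σ : Equiv.Perm (Fin k)) :
    ordSet k σ = (fun y : Fin k → ℝ => y ∘ σ) ⁻¹' ordSet k 1 := by
  ext y
  constructor <;> intro h m n <;> simpa using h m n

lemma ordSet_disjoint {k : ℕ} {σ τ : Equiv.Perm (Fin k)} (h : σ ≠ τ) :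
    Disjoint (ordSet k σ) (ordSet k τ) := by
  rw [Set.disjoint_left]
  intro y hyσ hyτ
  rw [mem_ordSet_iff_strictMono] at hyσ hyτ
  set f : Fin k → ℝ := fun m => Int.fract (y m) with hf
  have hfi : Function.Injective f := by
    have : Function.Injective (f ∘ σ) := hyσ.injective
    intro a b hab
    have := @this (σ.symm a) (σ.symm b) (by simpa [Function.comp] using hab)
    simpa using congrArg σ this
  have : f ∘ σ = f ∘ τ := Tuple.unique_monotone hyσ.monotone hyτ.monotone
  exact h (Equiv.ext fun m => hfi (congrFun this m))

lemma iUnion_ordSet {k : ℕ} :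
    (⋃ σ : Equiv.Perm (Fin k), ordSet k σ) =
      {y : Fin k → ℝ | Function.Injective fun m => Int.fract (y m)} := by
  ext y
  simp only [Set.mem_iUnion, Set.mem_setOf_eq]
  constructor
  · rintro ⟨σ, hσ⟩
    rw [mem_ordSet_iff_strictMono] at hσ
    have : Function.Injective ((fun m => Int.fract (y m)) ∘ σ) := hσ.injective
    intro a b hab
    have := @this (σ.symm a) (σ.symm b) (by simpa [Function.comp] using hab)
    simpa using congrArg σ this
  · intro h
    set f : Fin k → ℝ := fun m => Int.fract (y m)
    refine ⟨Tuple.sort f, ?_⟩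
    rw [mem_ordSet_iff_strictMono]
    exact (Tuple.monotone_sort f).strictMono_of_injective (h.comp (Tuple.sort f).injective)

lemma mem_ordSet (k : ℕ) (σ : Equiv.Perm (Fin k)) (y : Fin k → ℝ) :
    y ∈ ordSet k σ ↔ ∀ m n, m < n ↔ Int.fract (y (σ m)) < Int.fract (y (σ n)) :=
  Iff.rfl

lemma map_comp_perm (μ : Measure ℝ) [IsProbabilityMeasure μ] (k : ℕ) (σ : Equiv.Perm (Fin k)) :
    Measure.map (fun y : Fin k → ℝ => y ∘ σ) (Measure.pi fun _ => μ) = Measure.pi fun _ => μ := by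
  have hmeas : Measurable (fun y : Fin k → ℝ => y ∘ σ) :=
    measurable_pi_lambda _ fun i => measurable_pi_apply _
  symm
  refine Measure.pi_eq fun s hs => ?_
  rw [Measure.map_apply hmeas (MeasurableSet.univ_pi hs)]
  have : (fun y : Fin k → ℝ => y ∘ σ) ⁻¹' (Set.pi Set.univ s) =
      Set.pi Set.univ (fun j => s (σ.symm j)) := by
    ext y
    simp only [Set.mem_preimage, Set.mem_pi, Set.mem_univ, forall_true_left, Function.comp]
    constructor
    · intro h j; simpa using h (σ.symm j)
    · intro h i; simpa using h (σ i)
  rw [this, Measure.pi_pi]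
  exact Equiv.prod_comp σ.symm fun j => μ (s j)

lemma pi_ordSet_eq (μ : Measure ℝ) [IsProbabilityMeasure μ] (k : ℕ)
    (hG : (Measure.pi fun _ : Fin k => μ)
      {y | Function.Injective fun m => Int.fract (y m)} = 1)
    (σ : Equiv.Perm (Fin k)) :
    (Measure.pi fun _ : Fin k => μ) (ordSet k σ) = ((k.factorial : ℝ≥0∞))⁻¹ := by
  set π := (Measure.pi fun _ : Fin k => μ) with hπ
  have hconst : ∀ τ : Equiv.Perm (Fin k), π (ordSet k τ) = π (ordSet k 1) := by
    intro τ
    have hmeas : Measurable (fun y : Fin k → ℝ => y ∘ τ) :=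
      measurable_pi_lambda _ fun i => measurable_pi_apply _
    rw [ordSet_eq_preimage k τ, ← Measure.map_apply hmeas (measurableSet_ordSet k 1),
      map_comp_perm μ k τ]
  have hsum : ∑ τ : Equiv.Perm (Fin k), π (ordSet k τ) = 1 := by
    rw [← tsum_fintype (L := SummationFilter.unconditional _), ← measure_iUnion (fun τ₁ τ₂ h => ordSet_disjoint h)
      (fun τ => measurableSet_ordSet k τ), iUnion_ordSet, hG]
  rw [Finset.sum_congr rfl (fun τ _ => hconst τ), Finset.sum_const, Finset.card_univ,
    Fintype.card_perm, Fintype.card_fin, nsmul_eq_mul] at hsum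
  rw [hconst σ]
  have hfact : ((k.factorial : ℝ≥0∞)) ≠ 0 := by
    simp [Nat.factorial_ne_zero]
  have hfact' : ((k.factorial : ℝ≥0∞)) ≠ ⊤ := by simp
  rw [← one_mul (π (ordSet k 1)), ← ENNReal.inv_mul_cancel hfact hfact', mul_assoc, hsum, mul_one]

lemma iIndepFun_comp_of_injective {ι ι' Ω : Type*} [MeasurableSpace Ω] {μ : Measure Ω}
    {f : ι → Ω → ℝ} (h : iIndepFun f μ)
    (g : ι' → ι) (hg : Function.Injective g) :
    iIndepFun (fun i => f (g i)) μ := by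
  classical
  rw [iIndepFun_iff_measure_inter_preimage_eq_mul] at h ⊢
  intro S sets hsets
  set sets' : ι → Set ℝ := fun i => ⋂ m ∈ S.filter (fun m => g m = i), sets m with hsets'
  have hfilter : ∀ m ∈ S, S.filter (fun m' => g m' = g m) = {m} := by
    intro m hm
    ext m'
    simp only [Finset.mem_filter, Finset.mem_singleton]
    constructor
    · rintro ⟨_, h2⟩; exact hg h2
    · rintro rfl; exact ⟨hm, rfl⟩
  have hkey : ∀ m ∈ S, sets' (g m) = sets m := by
    intro m hm
    change (⋂ m' ∈ S.filter (fun m' => g m' = g m), sets m') = sets m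
    rw [hfilter m hm]
    simp
  have hmeas' : ∀ i ∈ S.image g, MeasurableSet (sets' i) := by
    intro i hi
    refine MeasurableSet.biInter (Finset.countable_toSet _) fun m hm => ?_
    exact hsets m (Finset.mem_of_mem_filter m hm)
  have := h (S.image g) hmeas'
  rw [Finset.set_biInter_finset_image] at this
  rw [Finset.prod_image (fun a ha b hb hab => hg hab)] at this
  calc μ (⋂ m ∈ S, (fun ω => f (g m) ω) ⁻¹' sets m)
      = μ (⋂ m ∈ S, f (g m) ⁻¹' sets' (g m)) := by
        refine congrArg μ ?_
        refine Set.iInter₂_congr fun m hm => ?_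
        rw [hkey m hm]
    _ = ∏ m ∈ S, μ (f (g m) ⁻¹' sets' (g m)) := this
    _ = ∏ m ∈ S, μ ((fun ω => f (g m) ω) ⁻¹' sets m) := by
        refine Finset.prod_congr rfl fun m hm => ?_
        rw [hkey m hm]

lemma law_blocks {Ω : Type} [MeasurableSpace Ω] (P : Measure Ω) [IsProbabilityMeasure P]
    (ν : ℕ → Measure ℝ) (hprob : ∀ n, IsProbabilityMeasure (ν n))
    (X : ℕ → Ω → (ℕ → ℝ)) (hmeas : ∀ i n, Measurable fun ω => X i ω n)
    (hindep : iIndepFun (fun (p : ℕ × ℕ) ω => X p.1 ω p.2) P)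
    (hlaw : ∀ i n, Measure.map (fun ω => X i ω n) P = ν n)
    (k : ℕ) (idx : Fin k → ℕ) (hidx : Function.Injective idx) (j : ℕ) :
    Measure.map (fun ω m => X (idx m) ω j) P = Measure.pi (fun _ : Fin k => ν j) := by
  have := hprob j
  have hYmeas : Measurable (fun ω m => X (idx m) ω j) :=
    measurable_pi_lambda _ fun m => hmeas _ _
  symm
  refine Measure.pi_eq fun s hs => ?_
  rw [Measure.map_apply hYmeas (MeasurableSet.univ_pi hs)]
  have hg : Function.Injective (fun m : Fin k => (idx m, j)) := fun a b hab =>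
    hidx (congrArg Prod.fst hab)
  have hi := iIndepFun_comp_of_injective hindep (fun m : Fin k => (idx m, j)) hg
  have := hi.measure_inter_preimage_eq_mul Finset.univ (fun m _ => hs m)
  have hpre : (fun ω m => X (idx m) ω j) ⁻¹' (Set.pi Set.univ s) =
      ⋂ m ∈ Finset.univ, (fun ω => X (idx m) ω j) ⁻¹' s m := by
    ext ω; simp
  rw [hpre]
  rw [this]
  refine Finset.prod_congr rfl fun m _ => ?_
  rw [← hlaw (idx m) j, Measure.map_apply (hmeas _ _) (hs m)]

lemma meas_fract_eq_zero {Ω : Type} [MeasurableSpace Ω] (P : Measure Ω) [IsProbabilityMeasure P]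
    {f g : Ω → ℝ} (hf : Measurable f) (hg : Measurable g) (hfg : IndepFun f g P)
    (νg : Measure ℝ) (hlawg : Measure.map g P = νg)
    (hνg : ∀ a : ℝ, νg {x | Int.fract x = a} = 0) :
    P {ω | Int.fract (f ω) = Int.fract (g ω)} = 0 := by
  have : IsProbabilityMeasure νg := hlawg ▸ Measure.isProbabilityMeasure_map hg.aemeasurable
  have hD : MeasurableSet {p : ℝ × ℝ | Int.fract p.1 = Int.fract p.2} :=
    measurableSet_eq_fun (measurable_fract.comp measurable_fst)
      (measurable_fract.comp measurable_snd)
  have hmap := (indepFun_iff_map_prod_eq_prod_map_map hf.aemeasurable hg.aemeasurable).1 hfg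
  have : P {ω | Int.fract (f ω) = Int.fract (g ω)} =
      Measure.map (fun ω => (f ω, g ω)) P {p : ℝ × ℝ | Int.fract p.1 = Int.fract p.2} := by
    rw [Measure.map_apply (hf.prodMk hg) hD]
    rfl
  rw [this, hmap, hlawg, Measure.prod_apply hD]
  have : ∀ x : ℝ, νg (Prod.mk x ⁻¹' {p : ℝ × ℝ | Int.fract p.1 = Int.fract p.2}) = 0 := by
    intro x
    have : (Prod.mk x ⁻¹' {p : ℝ × ℝ | Int.fract p.1 = Int.fract p.2}) =
        {b : ℝ | Int.fract b = Int.fract x} := by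
      ext b; simp [eq_comm]
    rw [this]
    exact hνg (Int.fract x)
  simp only [this, lintegral_const, zero_mul]

lemma fract_fiber_null (μ : Measure ℝ) (hna : ∀ a : ℝ, μ {a} = 0) (a : ℝ) :
    μ {x | Int.fract x = a} = 0 := by
  have : NullSingletonClass μ := ⟨hna⟩
  refine measure_mono_null ?_ ((Set.countable_range fun z : ℤ => a + (z : ℝ)).measure_zero μ)
  intro x hx
  refine ⟨⌊x⌋, ?_⟩
  simp only [Set.mem_setOf_eq] at hx
  have h2 : a = x - ⌊x⌋ := by rw [← hx, Int.fract]
  show a + (⌊x⌋ : ℝ) = x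
  rw [h2]; ring

lemma blocks_iIndepSet {Ω : Type} [MeasurableSpace Ω] (P : Measure Ω) [IsProbabilityMeasure P]
    (X : ℕ → Ω → (ℕ → ℝ)) (hmeas : ∀ i n, Measurable fun ω => X i ω n)
    (hindep : iIndepFun (fun (p : ℕ × ℕ) ω => X p.1 ω p.2) P)
    (k : ℕ) (idx : Fin k → ℕ) (E : Set (Fin k → ℝ)) (hE : MeasurableSet E) :
    iIndepSet (fun j => (fun ω m => X (idx m) ω j) ⁻¹' E) P := by
  classical
  have hYmeas : ∀ j, Measurable (fun ω m => X (idx m) ω j) := fun j =>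
    measurable_pi_lambda _ fun m => hmeas _ _
  rw [iIndepSet_iff_meas_biInter (fun j => (hYmeas j) hE)]
  intro t
  induction t using Finset.induction with
  | empty => simp
  | @insert j0 t hj0 ih =>
    rw [Finset.set_biInter_insert, Finset.prod_insert hj0, ← ih]
    set S : Finset (ℕ × ℕ) := Finset.image (fun m => (idx m, j0)) Finset.univ with hS
    set T : Finset (ℕ × ℕ) :=
      Finset.image (fun p : Fin k × ℕ => (idx p.1, p.2)) (Finset.univ ×ˢ t) with hT
    have hST : Disjoint S T := by
      rw [Finset.disjoint_left]
      rintro p hpS hpT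
      rw [hS, Finset.mem_image] at hpS
      rw [hT, Finset.mem_image] at hpT
      obtain ⟨m, _, rfl⟩ := hpS
      obtain ⟨q, hq, hq2⟩ := hpT
      rw [Finset.mem_product] at hq
      have : q.2 = j0 := congrArg Prod.snd hq2
      exact hj0 (this ▸ hq.2)
    have hIF := hindep.indepFun_finset S T hST (fun p => hmeas p.1 p.2)
    have hmemS : ∀ m : Fin k, (idx m, j0) ∈ S := fun m =>
      Finset.mem_image.2 ⟨m, Finset.mem_univ m, rfl⟩
    have hmemT : ∀ (m : Fin k) (j : ℕ), j ∈ t → (idx m, j) ∈ T := fun m j hj =>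
      Finset.mem_image.2 ⟨(m, j), Finset.mem_product.2 ⟨Finset.mem_univ m, hj⟩, rfl⟩
    set ES : Set ((i : S) → ℝ) :=
      (fun gS : (i : S) → ℝ => fun m : Fin k => gS ⟨(idx m, j0), hmemS m⟩) ⁻¹' E with hES
    have hESm : MeasurableSet ES :=
      (measurable_pi_lambda _ fun m => measurable_pi_apply _) hE
    set FT : Set ((i : T) → ℝ) :=
      ⋂ (j : ℕ) (hj : j ∈ t),
        (fun gT : (i : T) → ℝ => fun m : Fin k => gT ⟨(idx m, j), hmemT m j hj⟩) ⁻¹' E with hFT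
    have hFTm : MeasurableSet FT := by
      refine MeasurableSet.iInter fun j => MeasurableSet.iInter fun hj => ?_
      exact (measurable_pi_lambda _ fun m => measurable_pi_apply _) hE
    have hA : (fun ω m => X (idx m) ω j0) ⁻¹' E =
        (fun ω (i : S) => X i.1.1 ω i.1.2) ⁻¹' ES := rfl
    have hB : (⋂ j ∈ t, (fun ω m => X (idx m) ω j) ⁻¹' E) =
        (fun ω (i : T) => X i.1.1 ω i.1.2) ⁻¹' FT := by
      ext ω
      simp only [Set.mem_iInter, Set.mem_preimage, hFT]
    rw [hA, hB]
    exact hIF.meas_inter ⟨ES, hESm, rfl⟩ ⟨FT, hFTm, rfl⟩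

lemma key_infinite {Ω : Type} [MeasurableSpace Ω] (P : Measure Ω) [IsProbabilityMeasure P]
    (ν : ℕ → Measure ℝ) (hprob : ∀ n, IsProbabilityMeasure (ν n))
    (hna : ∀ (n : ℕ) (a : ℝ), ν n {a} = 0)
    (X : ℕ → Ω → (ℕ → ℝ)) (hmeas : ∀ i n, Measurable fun ω => X i ω n)
    (hindep : iIndepFun (fun (p : ℕ × ℕ) ω => X p.1 ω p.2) P)
    (hlaw : ∀ i n, Measure.map (fun ω => X i ω n) P = ν n)
    (k : ℕ) (idx : Fin k → ℕ) (hidx : Function.Injective idx) (σ : Equiv.Perm (Fin k)) :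
    ∀ᵐ ω ∂P, {j : ℕ | ∀ m n, m < n ↔
      Int.fract (X (idx (σ m)) ω j) < Int.fract (X (idx (σ n)) ω j)}.Infinite := by
  set A : ℕ → Set Ω := fun j => (fun ω m => X (idx m) ω j) ⁻¹' ordSet k σ with hA
  have hYmeas : ∀ j, Measurable (fun ω m => X (idx m) ω j) := fun j =>
    measurable_pi_lambda _ fun m => hmeas _ _
  have hAm : ∀ j, MeasurableSet (A j) := fun j => (hYmeas j) (measurableSet_ordSet k σ)
  have hGm : MeasurableSet {y : Fin k → ℝ | Function.Injective fun m => Int.fract (y m)} := by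
    rw [← iUnion_ordSet]
    exact MeasurableSet.iUnion fun τ => measurableSet_ordSet k τ
  -- full measure of the no-ties event
  have hG : ∀ j, (Measure.pi fun _ : Fin k => ν j)
      {y | Function.Injective fun m => Int.fract (y m)} = 1 := by
    intro j
    rw [← law_blocks P ν hprob X hmeas hindep hlaw k idx hidx j,
      Measure.map_apply (hYmeas j) hGm]
    have hpre : (fun ω m => X (idx m) ω j) ⁻¹'
        {y : Fin k → ℝ | Function.Injective fun m => Int.fract (y m)} =
        {ω | Function.Injective fun m => Int.fract (X (idx m) ω j)} := rfl
    rw [hpre, ← prob_compl_eq_zero_iff]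
    · set U : Set Ω := ⋃ (p : Fin k × Fin k) (_ : p.1 ≠ p.2),
        {ω | Int.fract (X (idx p.1) ω j) = Int.fract (X (idx p.2) ω j)} with hU
      refine measure_mono_null (t := U) (fun ω hω => ?_) ?_
      · simp only [Set.mem_compl_iff, Set.mem_setOf_eq, Function.not_injective_iff] at hω
        obtain ⟨m, n, heq, hne⟩ := hω
        exact Set.mem_iUnion.2 ⟨(m, n), Set.mem_iUnion.2 ⟨hne, heq⟩⟩
      · refine measure_iUnion_null fun p : Fin k × Fin k => ?_
        refine measure_iUnion_null fun hne : p.1 ≠ p.2 => ?_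
        refine meas_fract_eq_zero P (hmeas (idx p.1) j) (hmeas (idx p.2) j) ?_
          (ν j) (hlaw _ _) (fract_fiber_null (ν j) (hna j))
        exact hindep.indepFun (f := fun q ω => X q.1 ω q.2)
          (i := (idx p.1, j)) (j := (idx p.2, j))
          (by simp only [ne_eq, Prod.mk.injEq]; exact fun h => hne (hidx h.1))
    · exact (hYmeas j) hGm
  -- probability of each event
  have hprobA : ∀ j, P (A j) = ((k.factorial : ℝ≥0∞))⁻¹ := by
    intro j
    have h1 := hprob j
    have h2 : P (A j) = Measure.map (fun ω m => X (idx m) ω j) P (ordSet k σ) := by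
      rw [Measure.map_apply (hYmeas j) (measurableSet_ordSet k σ)]
    rw [h2, law_blocks P ν hprob X hmeas hindep hlaw k idx hidx j]
    exact pi_ordSet_eq (ν j) k (hG j) σ
  -- Borel–Cantelli
  have hBC := measure_limsup_eq_one hAm
    (blocks_iIndepSet P X hmeas hindep k idx (ordSet k σ) (measurableSet_ordSet k σ))
    (by
      simp only [hprobA]
      exact ENNReal.tsum_const_eq_top_of_ne_zero (ENNReal.inv_ne_zero.2 (by simp)))
  have hae : ∀ᵐ ω ∂P, ω ∈ limsup A atTop := by
    rw [ae_iff]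
    have := (prob_compl_eq_zero_iff (MeasurableSet.measurableSet_limsup hAm)).2 hBC
    exact this
  filter_upwards [hae] with ω hω
  rw [mem_limsup_iff_frequently_mem] at hω
  exact Nat.frequently_atTop_iff_infinite.1 (hω.mono fun j hj => hj)


/-- for an i.i.d. sequence of points of `ℝ^ℕ`, each with a fixed product-type
law with non-atomic factors `ν n` (all coordinates of all points being independent), almost
every realization has the independent order property. -/
theorem ae_iop_of_product_type
    {Ω : Type} [MeasurableSpace Ω] (P : Measure Ω) [IsProbabilityMeasure P]
    (ν : ℕ → Measure ℝ) (hprob : ∀ n, IsProbabilityMeasure (ν n))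
    (hna : ∀ (n : ℕ) (a : ℝ), ν n {a} = 0)
    (X : ℕ → Ω → (ℕ → ℝ)) (hmeas : ∀ i n, Measurable fun ω => X i ω n)
    (hindep : iIndepFun (fun (p : ℕ × ℕ) ω => X p.1 ω p.2) P)
    (hlaw : ∀ i n, Measure.map (fun ω => X i ω n) P = ν n) :
    ∀ᵐ ω ∂P, HasIOP (fun i => X i ω) := by
  classical
  have hall : ∀ᵐ ω ∂P, ∀ t : (Σ k : ℕ, (Fin k → ℕ) × Equiv.Perm (Fin k)),
      Function.Injective t.2.1 → {j : ℕ | ∀ m n, m < n ↔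
        Int.fract (X (t.2.1 (t.2.2 m)) ω j) < Int.fract (X (t.2.1 (t.2.2 n)) ω j)}.Infinite := by
    rw [ae_all_iff]
    rintro ⟨k, idx, σ⟩
    by_cases hidx : Function.Injective idx
    · filter_upwards [key_infinite P ν hprob hna X hmeas hindep hlaw k idx hidx σ] with ω h _
      exact h
    · exact ae_of_all _ fun ω h => absurd h hidx
  filter_upwards [hall] with ω hω
  intro k idx hidx N ord
  obtain ⟨f, hfinj, hfmem⟩ := exists_injective_mem
    (fun ℓ => {j : ℕ | ∀ m n, m < n ↔
      Int.fract (X (idx (ord ℓ m)) ω j) < Int.fract (X (idx (ord ℓ n)) ω j)})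
    (fun ℓ => hω ⟨k, idx, ord ℓ⟩ hidx)
  exact ⟨f, hfinj, fun ℓ => hfmem ℓ⟩
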